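/- arXiv:1804.07287 — 8 statements merged into one kernel-verified Lean document; each statement's English description precedes it below -/
import Mathlib

section
/- Let f : [0,∞) → ℝ be increasing, strictly convex, with f(0) = 0, and satisfy f(3x) ≥ 2f(2x) for all real x ≥ 1. Then for all real y ≥ 1 and all real x ≥ 2y, one has f(x + y) ≥ f(x) + f(2y). -/
/-- Corollary: moving half, first part. -/
theorem moving_half_even
    (f : ℝ → ℝ) (hmono : StrictMonoOn f (Set.Ici (0 : ℝ)))
    (hconv : StrictConvexOn ℝ (Set.Ici (0 : ℝ)) f)
    (hf0 : f 0 = 0)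
    (hgrow : ∀ x : ℝ, 1 ≤ x → f (3 * x) ≥ 2 * f (2 * x)) :
    ∀ y x : ℝ, 1 ≤ y → 2 * y ≤ x → f (x + y) ≥ f x + f (2 * y) := by
  intro y x hy hxy
  have hy0 : (0:ℝ) < y := by linarith
  have hc := hconv.convexOn
  rcases eq_or_lt_of_le hxy with rfl | hlt
  · have := hgrow y hy
    have h3 : (3:ℝ) * y = 2 * y + y := by ring
    rw [h3] at this
    linarith
  · -- slopes: slope on [2y,3y] ≤ slope on [2y,x+y] ≤ slope on [x,x+y]
    have m2y : (2*y : ℝ) ∈ Set.Ici (0:ℝ) := by simp; linarith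
    have m3y : (3*y : ℝ) ∈ Set.Ici (0:ℝ) := by simp; linarith
    have mxy : (x + y : ℝ) ∈ Set.Ici (0:ℝ) := by simp; linarith
    have mx : (x : ℝ) ∈ Set.Ici (0:ℝ) := by simp; linarith
    have h1 : (f (3*y) - f (2*y)) / (3*y - 2*y) ≤ (f (x+y) - f (2*y)) / (x+y - 2*y) :=
      hc.secant_mono m2y m3y mxy (by linarith) (by linarith) (by linarith)
    have h2 : (f (2*y) - f (x+y)) / (2*y - (x+y)) ≤ (f x - f (x+y)) / (x - (x+y)) :=
      hc.secant_mono mxy m2y mx (by linarith) (by linarith) (by linarith)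
    have e2 : (f (2*y) - f (x+y)) / (2*y - (x+y)) = (f (x+y) - f (2*y)) / (x+y - 2*y) := by
      rw [← neg_div_neg_eq]; ring_nf
    have e3 : (f x - f (x+y)) / (x - (x+y)) = (f (x+y) - f x) / y := by
      rw [← neg_div_neg_eq]; ring_nf
    rw [e2, e3] at h2
    have e1 : (f (3*y) - f (2*y)) / (3*y - 2*y) = (f (3*y) - f (2*y)) / y := by ring_nf
    rw [e1] at h1
    have hchain : (f (3*y) - f (2*y)) / y ≤ (f (x+y) - f x) / y := le_trans h1 h2
    have hg := hgrow y hy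
    have := (div_le_div_iff_of_pos_right hy0).mp hchain
    linarith
end

section
/- Let f : [0,∞) → ℝ be increasing, strictly convex, with f(0) = 0, and satisfy f(3x + 2) ≥ f(2x + 2) + f(2x + 1) for all real x ≥ 1. Then for all real y ≥ 1 and all real x ≥ 2y + 2, one has f(x + y) ≥ f(x) + f(2y + 1). -/
/-- Convex functions have superadditive increments. -/
lemma convex_incr_mono (f : ℝ → ℝ)
    (hconv : ConvexOn ℝ (Set.Ici (0 : ℝ)) f)
    {a b y : ℝ} (ha : 0 ≤ a) (hab : a ≤ b) (hy : 0 < y) :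
    f (a + y) - f a ≤ f (b + y) - f b := by
  have hb : (0:ℝ) ≤ b := le_trans ha hab
  have hd : 0 < b + y - a := by linarith
  set t : ℝ := y / (b + y - a) with ht
  have ht0 : 0 < t := div_pos hy hd
  have ht1 : t ≤ 1 := by
    rw [ht, div_le_one hd]; linarith
  have hs0 : 0 ≤ 1 - t := by linarith
  have h1 := hconv.2 (Set.mem_Ici.mpr ha) (Set.mem_Ici.mpr (by linarith : (0:ℝ) ≤ b + y))
    hs0 (le_of_lt ht0) (by ring)
  have h2 := hconv.2 (Set.mem_Ici.mpr ha) (Set.mem_Ici.mpr (by linarith : (0:ℝ) ≤ b + y))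
    (le_of_lt ht0) hs0 (by ring)
  have e1 : (1 - t) • a + t • (b + y) = a + y := by
    simp only [smul_eq_mul]
    field_simp [ht]
    have htm : t * (b + y - a) = y := by rw [ht, div_mul_cancel₀]; exact hd.ne'
    linear_combination htm
  have e2 : t • a + (1 - t) • (b + y) = b := by
    simp only [smul_eq_mul]
    field_simp [ht]
    have htm : t * (b + y - a) = y := by rw [ht, div_mul_cancel₀]; exact hd.ne'
    linear_combination -htm
  rw [e1] at h1
  rw [e2] at h2
  simp only [smul_eq_mul] at h1 h2
  nlinarith [h1, h2]

/-- Corollary: moving half, second part. -/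
theorem moving_half_odd
    (f : ℝ → ℝ) (hmono : StrictMonoOn f (Set.Ici (0 : ℝ)))
    (hconv : StrictConvexOn ℝ (Set.Ici (0 : ℝ)) f)
    (hf0 : f 0 = 0)
    (hgrow : ∀ x : ℝ, 1 ≤ x → f (3 * x + 2) ≥ f (2 * x + 2) + f (2 * x + 1)) :
    ∀ y x : ℝ, 1 ≤ y → 2 * y + 2 ≤ x → f (x + y) ≥ f x + f (2 * y + 1) := by
  intro y x hy hx
  have hy0 : (0:ℝ) < y := by linarith
  have h1 := hgrow y hy
  have h2 : f (2 * y + 2 + y) - f (2 * y + 2) ≤ f (x + y) - f x :=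
    convex_incr_mono f hconv.convexOn (by linarith) hx hy0
  have e : 2 * y + 2 + y = 3 * y + 2 := by ring
  rw [e] at h2
  linarith
end

section
/- Let f : [0,∞) → ℝ be increasing, strictly convex, with f(0) = 0, and satisfy f(3x) ≥ 2f(2x) for all real x ≥ 1. Then f(x)/x tends to +∞ as x → +∞. -/
/-- `f x / x → +∞` as `x → +∞`. -/
theorem fast_growth
    (f : ℝ → ℝ) (hmono : StrictMonoOn f (Set.Ici (0 : ℝ)))
    (hconv : StrictConvexOn ℝ (Set.Ici (0 : ℝ)) f)
    (hf0 : f 0 = 0)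
    (hgrow : ∀ x : ℝ, 1 ≤ x → f (3 * x) ≥ 2 * f (2 * x)) :
    Filter.Tendsto (fun x : ℝ => f x / x) Filter.atTop Filter.atTop := by
  set g : ℝ → ℝ := fun x => f x / x with hg
  -- g is monotone on positives
  have gmono : ∀ a b : ℝ, 0 < a → a ≤ b → g a ≤ g b := by
    intro a b ha hab
    have hb : 0 < b := lt_of_lt_of_le ha hab
    have := hconv.convexOn.secant_mono (a := 0) (x := a) (y := b)
      (Set.self_mem_Ici) (le_of_lt ha) (le_of_lt hb) (ne_of_gt ha) (ne_of_gt hb) hab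
    simpa [hg, hf0] using this
  have g2pos : 0 < g 2 := by
    have : f 0 < f 2 := hmono (Set.mem_Ici.mpr (le_refl 0)) (by norm_num) (by norm_num)
    rw [hf0] at this
    simpa [hg] using by positivity
  -- growth step for g
  have gstep : ∀ x : ℝ, 1 ≤ x → (4 / 3 : ℝ) * g (2 * x) ≤ g (3 * x) := by
    intro x hx
    have hx0 : 0 < x := lt_of_lt_of_le one_pos hx
    have h := hgrow x hx
    rw [ge_iff_le] at h
    show (4 / 3 : ℝ) * (f (2 * x) / (2 * x)) ≤ f (3 * x) / (3 * x)
    rw [← mul_div_assoc, div_le_div_iff₀ (by positivity) (by positivity)]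
    nlinarith [h]
  -- sequence y n = 2 * (3/2)^n
  have key : ∀ n : ℕ, (4 / 3 : ℝ) ^ n * g 2 ≤ g (2 * (3 / 2 : ℝ) ^ n) := by
    intro n
    induction n with
    | zero => simp
    | succ n ih =>
      have h1 : (1 : ℝ) ≤ (3 / 2 : ℝ) ^ n := one_le_pow₀ (by norm_num)
      have h2 := gstep ((3 / 2 : ℝ) ^ n) h1
      have heq : (3 : ℝ) * (3 / 2 : ℝ) ^ n = 2 * (3 / 2 : ℝ) ^ (n + 1) := by
        rw [pow_succ]; ring
      rw [heq] at h2
      calc (4 / 3 : ℝ) ^ (n + 1) * g 2 = (4 / 3) * ((4 / 3 : ℝ) ^ n * g 2) := by ring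
        _ ≤ (4 / 3) * g (2 * (3 / 2 : ℝ) ^ n) := by linarith
        _ ≤ g (2 * (3 / 2 : ℝ) ^ (n + 1)) := h2
  rw [Filter.tendsto_atTop]
  intro b
  -- choose n with (4/3)^n * g 2 ≥ b
  have htend : Filter.Tendsto (fun n : ℕ => (4 / 3 : ℝ) ^ n * g 2) Filter.atTop Filter.atTop :=
    Filter.Tendsto.atTop_mul_const g2pos (tendsto_pow_atTop_atTop_of_one_lt (by norm_num))
  obtain ⟨n, hn⟩ := (Filter.tendsto_atTop.mp htend b).exists
  rw [Filter.eventually_atTop]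
  refine ⟨2 * (3 / 2 : ℝ) ^ n, fun x hx => ?_⟩
  have hyn : (0 : ℝ) < 2 * (3 / 2 : ℝ) ^ n := by positivity
  exact le_trans hn (le_trans (key n) (gmono _ _ hyn hx))
end

section
/- Let f : [0,∞) → ℝ be increasing, strictly convex, with f(0) = 0, and satisfy f(3x) ≥ 2f(2x) for all real x ≥ 1. Let k ≥ 3 and s₁ ≥ 1 be natural numbers and let s₂ be a natural number with 2 ≤ s₂ ≤ s₁ − ⌈s₁/k⌉. Then f(s₁ + s₂ − ⌈(s₁ + s₂)/k⌉) ≥ f(s₁ − ⌈s₁/k⌉) + f(s₂). -/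
/-- For a convex function on `[0, ∞)`, increments of equal length are larger
further to the right. -/
lemma convex_increment_le {f : ℝ → ℝ} (hc : ConvexOn ℝ (Set.Ici (0 : ℝ)) f)
    {a b t : ℝ} (ha : 0 ≤ a) (hab : a ≤ b) (ht : 0 < t) :
    f (a + t) - f a ≤ f (b + t) - f b := by
  rcases eq_or_lt_of_le hab with rfl | hab
  · exact le_refl _
  have hb : (0 : ℝ) ≤ b := ha.trans hab.le
  have hat : a + t ∈ Set.Ici (0 : ℝ) := by simp only [Set.mem_Ici]; linarith
  have hbt : b + t ∈ Set.Ici (0 : ℝ) := by simp only [Set.mem_Ici]; linarith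
  have h1 := hc.secant_mono (Set.mem_Ici.mpr ha) hat hbt
    (by intro h; linarith [congrArg id h] : a + t ≠ a)
    (by intro h; linarith [congrArg id h] : b + t ≠ a) (by linarith)
  have h2 := hc.secant_mono hbt (Set.mem_Ici.mpr ha) (Set.mem_Ici.mpr hb)
    (by intro h; linarith [congrArg id h] : a ≠ b + t)
    (by intro h; linarith [congrArg id h] : b ≠ b + t) hab.le
  rw [show a + t - a = t by ring] at h1
  rw [show a - (b + t) = -(b + t - a) by ring,
      show f a - f (b + t) = -(f (b + t) - f a) by ring, neg_div_neg_eq,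
      show b - (b + t) = -t by ring,
      show f b - f (b + t) = -(f (b + t) - f b) by ring, neg_div_neg_eq] at h2
  have := h1.trans h2
  rwa [div_le_div_iff₀ ht ht, mul_le_mul_iff_of_pos_right ht] at this

/-- Case II of the proof of the main proposition. -/
theorem case_two_inequality
    (f : ℝ → ℝ) (hmono : StrictMonoOn f (Set.Ici (0 : ℝ)))
    (hconv : StrictConvexOn ℝ (Set.Ici (0 : ℝ)) f)
    (hf0 : f 0 = 0)
    (hgrow : ∀ x : ℝ, 1 ≤ x → f (3 * x) ≥ 2 * f (2 * x))
    (k s₁ s₂ : ℕ) (hk : 3 ≤ k) (hs₁ : 1 ≤ s₁)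
    (hs₂low : 2 ≤ s₂) (hs₂high : (s₂ : ℤ) ≤ (s₁ : ℤ) - ⌈(s₁ : ℚ) / (k : ℚ)⌉) :
    f (((s₁ : ℝ) + s₂) - (⌈((s₁ : ℚ) + s₂) / (k : ℚ)⌉ : ℤ)) ≥
      f ((s₁ : ℝ) - (⌈(s₁ : ℚ) / (k : ℚ)⌉ : ℤ)) + f s₂ := by
  set c₁ : ℤ := ⌈(s₁ : ℚ) / (k : ℚ)⌉ with hc₁def
  set c₂ : ℤ := ⌈(s₂ : ℚ) / (k : ℚ)⌉ with hc₂def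
  set c : ℤ := ⌈((s₁ : ℚ) + s₂) / (k : ℚ)⌉ with hcdef
  -- subadditivity of the ceiling
  have hsplit : c ≤ c₁ + c₂ := by
    rw [hcdef, add_div]
    exact Int.ceil_add_le _ _
  -- c₂ ≤ ⌈s₂/3⌉
  have hk3 : (3 : ℚ) ≤ (k : ℚ) := by exact_mod_cast hk
  have h23 : c₂ ≤ ⌈(s₂ : ℚ) / 3⌉ := by
    apply Int.ceil_le_ceil
    exact div_le_div_of_nonneg_left (by positivity) (by norm_num) hk3
  -- 3 ⌈s₂/3⌉ ≤ s₂ + 2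
  have h3 : 3 * ⌈(s₂ : ℚ) / 3⌉ ≤ (s₂ : ℤ) + 2 := by
    have h := Int.ceil_lt_add_one ((s₂ : ℚ) / 3)
    have hq : ((3 * ⌈(s₂ : ℚ) / 3⌉ : ℤ) : ℚ) < (((s₂ : ℤ) + 3 : ℤ) : ℚ) := by
      push_cast
      linarith
    have := (by exact_mod_cast hq : 3 * ⌈(s₂ : ℚ) / 3⌉ < (s₂ : ℤ) + 3)
    omega
  have hs₂' : (2 : ℤ) ≤ (s₂ : ℤ) := by exact_mod_cast hs₂low
  have h2c2 : 2 * c₂ ≤ (s₂ : ℤ) := by omega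
  have hdiff : 2 * (c - c₁) ≤ (s₂ : ℤ) := by omega
  -- move to the reals
  have hA : (s₂ : ℝ) ≤ (s₁ : ℝ) - (c₁ : ℝ) := by
    have : ((s₂ : ℤ) : ℝ) ≤ (((s₁ : ℤ) - c₁ : ℤ) : ℝ) := by exact_mod_cast hs₂high
    push_cast at this
    linarith
  have hs₂R : (2 : ℝ) ≤ (s₂ : ℝ) := by exact_mod_cast hs₂low
  set x : ℝ := (s₂ : ℝ) / 2 with hxdef
  have hx1 : (1 : ℝ) ≤ x := by rw [hxdef]; linarith
  have h2x : 2 * x = (s₂ : ℝ) := by rw [hxdef]; ring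
  set A : ℝ := (s₁ : ℝ) - (c₁ : ℝ) with hAdef
  set T : ℝ := ((s₁ : ℝ) + s₂) - (c : ℝ) with hTdef
  have hTA : A + x ≤ T := by
    have : ((2 * (c - c₁) : ℤ) : ℝ) ≤ ((s₂ : ℤ) : ℝ) := by exact_mod_cast hdiff
    push_cast at this
    rw [hAdef, hTdef, hxdef]
    linarith
  have hA0 : (0 : ℝ) ≤ A := by rw [hAdef]; linarith
  -- convexity step
  have hinc := convex_increment_le hconv.convexOn (a := 2 * x) (b := A) (t := x)
    (by linarith) (by linarith) (by linarith)
  rw [show 2 * x + x = 3 * x by ring] at hinc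
  -- growth step
  have hgx := hgrow x hx1
  -- monotonicity step
  have hmon : f (A + x) ≤ f T := by
    apply (hmono.monotoneOn) _ _ hTA
    · simp only [Set.mem_Ici]; linarith
    · simp only [Set.mem_Ici]; linarith
  have hfs₂ : f (s₂ : ℝ) = f (2 * x) := by rw [h2x]
  rw [ge_iff_le]
  calc f A + f (s₂ : ℝ) = f A + f (2 * x) := by rw [hfs₂]
    _ ≤ f A + (f (3 * x) - f (2 * x)) := by linarith
    _ ≤ f A + (f (A + x) - f A) := by linarith
    _ = f (A + x) := by ring
    _ ≤ f T := hmon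
end

section
/- Let f : [0,∞) → ℝ be increasing, strictly convex, with f(0) = 0, and satisfy f(3x) ≥ 2f(2x) for all real x ≥ 1. Then for every natural number s ≥ 3 one has f(s − 1) + 2f(1) < f(s). -/
/-- `f (s - 1) + 2 f 1 < f s` for every natural `s ≥ 3`. -/
theorem singleton_merge_inequality
    (f : ℝ → ℝ) (hmono : StrictMonoOn f (Set.Ici (0 : ℝ)))
    (hconv : StrictConvexOn ℝ (Set.Ici (0 : ℝ)) f)
    (hf0 : f 0 = 0)
    (hgrow : ∀ x : ℝ, 1 ≤ x → f (3 * x) ≥ 2 * f (2 * x)) :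
    ∀ s : ℕ, 3 ≤ s → f ((s : ℝ) - 1) + 2 * f 1 < f s := by
  intro s hs
  have hS : (3 : ℝ) ≤ (s : ℝ) := by exact_mod_cast hs
  set S : ℝ := (s : ℝ) with hSdef
  have hS2 : (0 : ℝ) < S - 2 := by linarith
  set t : ℝ := 1 / (S - 2) with htdef
  have ht0 : 0 < t := by positivity
  have ht1 : t ≤ 1 := by
    rw [htdef, div_le_one hS2]; linarith
  have htS : t * (S - 2) = 1 := by
    rw [htdef]; exact one_div_mul_cancel (ne_of_gt hS2)
  -- strict convexity: 2 f 1 < f 2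
  have h2f1 : 2 * f 1 < f 2 := by
    have := hconv.2 (Set.mem_Ici.mpr (le_refl (0:ℝ)))
      (show (2:ℝ) ∈ Set.Ici 0 from Set.mem_Ici.mpr (by norm_num))
      (show (0:ℝ) ≠ 2 by norm_num) (show (0:ℝ) < 1/2 by norm_num)
      (show (0:ℝ) < 1/2 by norm_num) (by norm_num)
    simp only [smul_eq_mul, hf0] at this
    norm_num at this
    linarith
  -- convexity squeeze: f (S-1) + f 3 ≤ f 2 + f S
  have hc := hconv.convexOn.2
  have hA : f (S - 1) ≤ t * f 2 + (1 - t) * f S := by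
    have := hc (show (2:ℝ) ∈ Set.Ici 0 from Set.mem_Ici.mpr (by norm_num))
      (show S ∈ Set.Ici 0 from Set.mem_Ici.mpr (by linarith))
      (le_of_lt ht0) (show (0:ℝ) ≤ 1 - t by linarith) (by ring)
    simp only [smul_eq_mul] at this
    have he : t * 2 + (1 - t) * S = S - 1 := by nlinarith [htS]
    rwa [he] at this
  have hB : f 3 ≤ (1 - t) * f 2 + t * f S := by
    have := hc (show (2:ℝ) ∈ Set.Ici 0 from Set.mem_Ici.mpr (by norm_num))
      (show S ∈ Set.Ici 0 from Set.mem_Ici.mpr (by linarith))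
      (show (0:ℝ) ≤ 1 - t by linarith) (le_of_lt ht0) (by ring)
    simp only [smul_eq_mul] at this
    have he : (1 - t) * 2 + t * S = 3 := by nlinarith [htS]
    rwa [he] at this
  have hg := hgrow 1 le_rfl
  norm_num at hg
  linarith
end

section
/- Let f : [0,∞) → ℝ be increasing, strictly convex, with f(0) = 0, and satisfy f(3x) ≥ 2f(2x) for all real x ≥ 1. Let s₂ ≥ s₃ ≥ s₄ be real numbers with s₄ ≥ 2. Then f(s₂ + s₃/2 + s₄/2) ≥ f(s₂) + f(s₃) + f(s₄). -/
/-- Spreading inequality for convex functions: if `p ≤ x ≤ q` then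
`f x + f (p + q - x) ≤ f p + f q`. -/
lemma convex_spread_aux (f : ℝ → ℝ) (hconv : ConvexOn ℝ (Set.Ici (0 : ℝ)) f)
    {p q x : ℝ} (hp : 0 ≤ p) (hpx : p ≤ x) (hxq : x ≤ q) :
    f x + f (p + q - x) ≤ f p + f q := by
  rcases eq_or_lt_of_le (hpx.trans hxq) with h | h
  · have hx : x = p := le_antisymm (h ▸ hxq) hpx
    rw [hx, show p + q - p = q by ring]
  · set μ := (q - x) / (q - p) with hμ
    have hqp : 0 < q - p := by linarith
    have hμ0 : 0 ≤ μ := div_nonneg (by linarith) hqp.le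
    have hμ1 : μ ≤ 1 := by
      rw [div_le_one hqp]; linarith
    have hpmem : p ∈ Set.Ici (0:ℝ) := hp
    have hqmem : q ∈ Set.Ici (0:ℝ) := le_trans hp (by linarith)
    have h1 : f (μ • p + (1 - μ) • q) ≤ μ • f p + (1 - μ) • f q :=
      hconv.2 hpmem hqmem hμ0 (by linarith) (by ring)
    have h2 : f ((1 - μ) • p + μ • q) ≤ (1 - μ) • f p + μ • f q :=
      hconv.2 hpmem hqmem (by linarith) hμ0 (by ring)
    have e1 : μ • p + (1 - μ) • q = x := by
      simp only [smul_eq_mul, hμ]; field_simp; ring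
    have e2 : (1 - μ) • p + μ • q = p + q - x := by
      simp only [smul_eq_mul, hμ]; field_simp; ring
    rw [e1] at h1; rw [e2] at h2
    simp only [smul_eq_mul] at h1 h2
    linarith

/-- Merging two components into two larger ones. -/
theorem spread_two_components
    (f : ℝ → ℝ) (hmono : StrictMonoOn f (Set.Ici (0 : ℝ)))
    (hconv : StrictConvexOn ℝ (Set.Ici (0 : ℝ)) f)
    (hf0 : f 0 = 0)
    (hgrow : ∀ x : ℝ, 1 ≤ x → f (3 * x) ≥ 2 * f (2 * x))
    (s₂ s₃ s₄ : ℝ) (h43 : s₄ ≤ s₃) (h32 : s₃ ≤ s₂) (h4 : 2 ≤ s₄) :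
    f (s₂ + s₃ / 2 + s₄ / 2) ≥ f s₂ + f s₃ + f s₄ := by
  have hc := hconv.convexOn
  have h3 : 2 ≤ s₃ := le_trans h4 h43
  -- growth at x = s₃/2 and x = s₄/2
  have g3 : f (3 * (s₃ / 2)) ≥ 2 * f (2 * (s₃ / 2)) := hgrow _ (by linarith)
  have g4 : f (3 * (s₄ / 2)) ≥ 2 * f (2 * (s₄ / 2)) := hgrow _ (by linarith)
  have e3 : (2 : ℝ) * (s₃ / 2) = s₃ := by ring
  have e4 : (2 : ℝ) * (s₄ / 2) = s₄ := by ring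
  rw [e3] at g3; rw [e4] at g4
  -- first spread: p = s₃, x = 3 s₃ / 2, q = s₂ + s₃/2
  have sp1 : f (3 * (s₃ / 2)) + f (s₃ + (s₂ + s₃ / 2) - 3 * (s₃ / 2)) ≤
      f s₃ + f (s₂ + s₃ / 2) :=
    convex_spread_aux f hc (by linarith) (by linarith) (by linarith)
  have e5 : s₃ + (s₂ + s₃ / 2) - 3 * (s₃ / 2) = s₂ := by ring
  rw [e5] at sp1
  -- second spread: p = s₄, x = 3 s₄ / 2, q = s₂ + s₃/2 + s₄/2
  have sp2 : f (3 * (s₄ / 2)) + f (s₄ + (s₂ + s₃ / 2 + s₄ / 2) - 3 * (s₄ / 2)) ≤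
      f s₄ + f (s₂ + s₃ / 2 + s₄ / 2) :=
    convex_spread_aux f hc (by linarith) (by linarith) (by linarith)
  have e6 : s₄ + (s₂ + s₃ / 2 + s₄ / 2) - 3 * (s₄ / 2) = s₂ + s₃ / 2 := by ring
  rw [e6] at sp2
  linarith
end

section
/- Let f : [0,∞) → ℝ be increasing, strictly convex, with f(0) = 0, and satisfy f(3x) ≥ 2f(2x) for all real x ≥ 1. Then for every real c > 0, the quantity n·c/f(n) tends to 0 as the natural number n → ∞. -/
/-- `n c / f n → 0` as the natural number `n → ∞`, for every `c > 0`. -/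
theorem linear_over_f_tendsto_zero
    (f : ℝ → ℝ) (hmono : StrictMonoOn f (Set.Ici (0 : ℝ)))
    (hconv : StrictConvexOn ℝ (Set.Ici (0 : ℝ)) f)
    (hf0 : f 0 = 0)
    (hgrow : ∀ x : ℝ, 1 ≤ x → f (3 * x) ≥ 2 * f (2 * x)) :
    ∀ c : ℝ, 0 < c →
      Filter.Tendsto (fun n : ℕ => (n : ℝ) * c / f n) Filter.atTop (nhds 0) := by
  have hf2 : 0 < f 2 := by
    have := hmono (Set.self_mem_Ici : (0:ℝ) ∈ Set.Ici (0:ℝ)) (by norm_num : (2:ℝ) ∈ Set.Ici (0:ℝ)) (by norm_num)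
    linarith
  -- growth along the sequence 2 * (3/2)^k
  have hA : ∀ k : ℕ, 2 ^ k * f 2 ≤ f (2 * (3 / 2) ^ k) := by
    intro k
    induction k with
    | zero => norm_num
    | succ k ih =>
      have hx : (1:ℝ) ≤ (3/2) ^ k := one_le_pow₀ (by norm_num)
      have h := hgrow ((3/2) ^ k) hx
      have e1 : 2 * (3/2:ℝ) ^ (k+1) = 3 * ((3/2:ℝ) ^ k) := by ring
      rw [e1]
      calc (2:ℝ) ^ (k+1) * f 2 = 2 * (2 ^ k * f 2) := by ring
        _ ≤ 2 * f (2 * (3/2) ^ k) := by nlinarith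
        _ ≤ f (3 * (3/2) ^ k) := h
  -- slope monotonicity from 0
  have hB : ∀ a b : ℝ, 0 < a → a ≤ b → f a / a ≤ f b / b := by
    intro a b ha hab
    have hb : 0 < b := lt_of_lt_of_le ha hab
    have hms := hconv.convexOn.slope_mono (x := 0) (Set.self_mem_Ici)
    have h1 : a ∈ Set.Ici (0:ℝ) \ {0} := ⟨ha.le, ha.ne'⟩
    have h2 : b ∈ Set.Ici (0:ℝ) \ {0} := ⟨hb.le, hb.ne'⟩
    have := hms h1 h2 hab
    simpa [slope, hf0, div_eq_inv_mul, mul_comm] using this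
  -- f n / n → ∞
  have hC : Filter.Tendsto (fun n : ℕ => f n / n) Filter.atTop Filter.atTop := by
    rw [Filter.tendsto_atTop]
    intro M
    have hpow : Filter.Tendsto (fun k : ℕ => ((4:ℝ)/3) ^ k) Filter.atTop Filter.atTop :=
      tendsto_pow_atTop_atTop_of_one_lt (by norm_num)
    obtain ⟨k, hk⟩ := (hpow.eventually_ge_atTop (2 * M / f 2)).exists
    set y : ℝ := 2 * (3/2) ^ k with hy
    have hy0 : 0 < y := by positivity
    have hyM : M ≤ f y / y := by
      have h1 : 2 ^ k * f 2 ≤ f y := hA k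
      have h2 : M ≤ 2 ^ k * f 2 / y := by
        rw [div_le_iff₀ hf2] at hk
        rw [le_div_iff₀ hy0]
        have hp : ((4:ℝ)/3) ^ k * (3/2) ^ k = 2 ^ k := by
          rw [← mul_pow]; norm_num
        have h3 := mul_le_mul_of_nonneg_right hk
          (pow_nonneg (by norm_num : (0:ℝ) ≤ 3/2) k)
        calc M * y = 2 * M * (3/2) ^ k := by rw [hy]; ring
          _ ≤ (4/3) ^ k * f 2 * (3/2) ^ k := h3
          _ = 2 ^ k * f 2 := by rw [mul_right_comm, hp]
      calc M ≤ 2 ^ k * f 2 / y := h2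
        _ ≤ f y / y := by gcongr
    rw [Filter.eventually_atTop]
    refine ⟨⌈y⌉₊ + 1, fun n hn => ?_⟩
    have hny : y ≤ (n : ℝ) := by
      calc y ≤ (⌈y⌉₊ : ℝ) := Nat.le_ceil y
        _ ≤ (n : ℝ) := by exact_mod_cast Nat.le_of_succ_le hn
    exact le_trans hyM (hB y n hy0 hny)
  intro c hc
  have h0 : Filter.Tendsto (fun n : ℕ => (f n / n)⁻¹) Filter.atTop (nhds 0) :=
    hC.inv_tendsto_atTop
  have heq : (fun n : ℕ => (n : ℝ) * c / f n) = fun n : ℕ => c * (f n / n)⁻¹ := by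
    funext n; rw [inv_div]; ring
  rw [heq]
  simpa using h0.const_mul c
end

section
/- Let f : [0,∞) → ℝ be increasing, strictly convex, with f(0) = 0, satisfy f(3x) ≥ 2f(2x) for all real x ≥ 1, and suppose that s₁ > s₂ ≥ 2 are natural numbers with s₁ − ⌈s₁/k⌉ < s₂ < 2⌈s₁/k⌉ for some natural number k ≥ 3. Then k = 3, and writing s₁ = 3l + 1 with l ≥ 1, one has s₂ = 2l + 1 and f(s₁ + s₂ − ⌈(s₁ + s₂)/3⌉) ≥ f(s₁). -/
/-- Case III of the proof of the main proposition. -/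
theorem case_three_characterization
    (f : ℝ → ℝ) (hmono : StrictMonoOn f (Set.Ici (0 : ℝ)))
    (hconv : StrictConvexOn ℝ (Set.Ici (0 : ℝ)) f)
    (hf0 : f 0 = 0)
    (hgrow : ∀ x : ℝ, 1 ≤ x → f (3 * x) ≥ 2 * f (2 * x))
    (k s₁ s₂ : ℕ) (hk : 3 ≤ k) (h21 : s₂ < s₁) (hs₂ : 2 ≤ s₂)
    (hlow : (s₁ : ℤ) - ⌈(s₁ : ℚ) / (k : ℚ)⌉ < (s₂ : ℤ))
    (hhigh : (s₂ : ℤ) < 2 * ⌈(s₁ : ℚ) / (k : ℚ)⌉) :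
    k = 3 ∧ ∃ l : ℕ, 1 ≤ l ∧ s₁ = 3 * l + 1 ∧ s₂ = 2 * l + 1 ∧
      f (((s₁ : ℝ) + s₂) - (⌈((s₁ : ℚ) + s₂) / 3⌉ : ℤ)) ≥ f s₁ := by
  have hkpos : (0:ℚ) < (k:ℚ) := by
    have : 0 < k := by omega
    exact_mod_cast this
  set c : ℤ := ⌈(s₁:ℚ)/(k:ℚ)⌉ with hc
  have hB : (s₁:ℤ) ≤ c * k := by
    have h := Int.le_ceil ((s₁:ℚ)/(k:ℚ))
    rw [← hc] at h
    rw [div_le_iff₀ hkpos] at h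
    exact_mod_cast h
  have hA : (c - 1) * (k:ℤ) < s₁ := by
    have h := Int.ceil_lt_add_one ((s₁:ℚ)/(k:ℚ))
    have h' : (c:ℚ) - 1 < (s₁:ℚ)/(k:ℚ) := by
      rw [← hc] at h; linarith
    rw [lt_div_iff₀ hkpos] at h'
    exact_mod_cast h'
  have hc2 : 2 ≤ c := by omega
  have hk3 : k = 3 := by
    by_contra hne
    have hk4 : (4:ℤ) ≤ (k:ℤ) := by omega
    have h1 : (c - 1) * 4 ≤ (c - 1) * (k:ℤ) :=
      mul_le_mul_of_nonneg_left hk4 (by omega)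
    have h2 : 4 * c - 4 < (s₁:ℤ) := by linarith
    omega
  subst hk3
  obtain ⟨l, hl1, hls1, hls2⟩ : ∃ l : ℕ, 1 ≤ l ∧ s₁ = 3*l+1 ∧ s₂ = 2*l+1 := by
    refine ⟨c.toNat - 1, ?_, ?_, ?_⟩ <;> omega
  set d : ℤ := ⌈((s₁:ℚ) + s₂)/3⌉ with hd
  have hdle : ((d:ℤ) - 1) * 3 < (s₁:ℤ) + s₂ := by
    have h := Int.ceil_lt_add_one (((s₁:ℚ) + s₂)/3)
    rw [← hd] at h
    have h' : (d:ℚ) - 1 < ((s₁:ℚ) + (s₂:ℚ))/3 := by linarith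
    rw [lt_div_iff₀ (by norm_num : (0:ℚ) < 3)] at h'
    exact_mod_cast h'
  have hge : (s₁:ℤ) ≤ (s₁:ℤ) + s₂ - d := by omega
  refine ⟨rfl, l, hl1, hls1, hls2, ?_⟩
  have hmR : (s₁:ℝ) ≤ (s₁:ℝ) + s₂ - (d:ℝ) := by exact_mod_cast hge
  have hs1nn : (0:ℝ) ≤ (s₁:ℝ) := by positivity
  exact hmono.monotoneOn (Set.mem_Ici.mpr hs1nn)
    (Set.mem_Ici.mpr (le_trans hs1nn hmR)) hmR
end
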